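/- Let z be an integer with z ≥ 2 and let M be an element of the subgroup of SL(2,ℤ) generated by T_z and S_z. If the trace of the matrix underlying M · T_z · M⁻¹ · S_z equals the trace of the matrix underlying T_z · S_z, then there exists an integer n such that M · T_z · M⁻¹ = S_z^n · T_z · S_z^{-n}; that is, M T_z M⁻¹ is conjugate to T_z by a power of S_z. -/

import Mathlib

/-- `Tz z` is the element of `SL(2,ℤ)` with underlying matrix `!![1, -z; 0, 1]`. -/
def Tz (z : ℤ) : Matrix.SpecialLinearGroup (Fin 2) ℤ :=
  ⟨!![1, -z; 0, 1], by simp [Matrix.det_fin_two_of]⟩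

/-- `Sz z` is the element of `SL(2,ℤ)` with underlying matrix `!![1, 0; z, 1]`. -/
def Sz (z : ℤ) : Matrix.SpecialLinearGroup (Fin 2) ℤ :=
  ⟨!![1, 0; z, 1], by simp [Matrix.det_fin_two_of]⟩

lemma Sz_mul (a b : ℤ) : Sz a * Sz b = Sz (a + b) := by
  apply Subtype.ext
  simp only [Matrix.SpecialLinearGroup.coe_mul]
  simp [Sz, Matrix.mul_fin_two]

lemma Sz_zero : Sz 0 = 1 := by
  apply Subtype.ext
  simp [Sz, Matrix.one_fin_two]

lemma Sz_inv (a : ℤ) : (Sz a)⁻¹ = Sz (-a) := by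
  rw [inv_eq_iff_mul_eq_one, Sz_mul]
  simp [Sz_zero]

lemma Sz_zpow (z : ℤ) (n : ℤ) : Sz z ^ n = Sz (n * z) := by
  induction n using Int.induction_on with
  | zero => simpa using Sz_zero.symm
  | succ n ih => rw [zpow_add, zpow_one, ih, Sz_mul]; ring_nf
  | pred n ih => rw [sub_eq_add_neg, zpow_add, ih, zpow_neg, zpow_one, Sz_inv, Sz_mul]; ring_nf

lemma closure_dvd (z : ℤ) (M : Matrix.SpecialLinearGroup (Fin 2) ℤ)
    (hM : M ∈ Subgroup.closure {Tz z, Sz z}) :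
    z ∣ (M.1 0 0 - 1) ∧ z ∣ M.1 0 1 ∧ z ∣ M.1 1 0 ∧ z ∣ (M.1 1 1 - 1) := by
  induction hM using Subgroup.closure_induction with
  | mem x hx =>
    rcases hx with h | h <;> subst h <;> simp [Tz, Sz]
  | one => simp
  | mul x y hx hy ihx ihy =>
    obtain ⟨a1, a2, a3, a4⟩ := ihx
    obtain ⟨b1, b2, b3, b4⟩ := ihy
    have hx00 : (x*y).1 0 0 = x.1 0 0 * y.1 0 0 + x.1 0 1 * y.1 1 0 := by
      simp [Matrix.mul_apply, Fin.sum_univ_two]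
    have hx01 : (x*y).1 0 1 = x.1 0 0 * y.1 0 1 + x.1 0 1 * y.1 1 1 := by
      simp [Matrix.mul_apply, Fin.sum_univ_two]
    have hx10 : (x*y).1 1 0 = x.1 1 0 * y.1 0 0 + x.1 1 1 * y.1 1 0 := by
      simp [Matrix.mul_apply, Fin.sum_univ_two]
    have hx11 : (x*y).1 1 1 = x.1 1 0 * y.1 0 1 + x.1 1 1 * y.1 1 1 := by
      simp [Matrix.mul_apply, Fin.sum_univ_two]
    refine ⟨?_, ?_, ?_, ?_⟩
    · rw [hx00]
      obtain ⟨k, hk⟩ := a1; obtain ⟨l, hl⟩ := b1; obtain ⟨m, hm⟩ := a2; obtain ⟨p, hp⟩ := b3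
      exact ⟨k + l + z*k*l + z*m*p, by
        linear_combination (y.1 0 0)*hk + (1+z*k)*hl + (y.1 1 0)*hm + (z*m)*hp⟩
    · rw [hx01]
      obtain ⟨l, hl⟩ := b2; obtain ⟨m, hm⟩ := a2
      exact ⟨x.1 0 0 * l + m * y.1 1 1, by linear_combination (x.1 0 0)*hl + (y.1 1 1)*hm⟩
    · rw [hx10]
      obtain ⟨m, hm⟩ := a3; obtain ⟨p, hp⟩ := b3
      exact ⟨m * y.1 0 0 + x.1 1 1 * p, by linear_combination (y.1 0 0)*hm + (x.1 1 1)*hp⟩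
    · rw [hx11]
      obtain ⟨k, hk⟩ := a4; obtain ⟨l, hl⟩ := b4; obtain ⟨m, hm⟩ := a3; obtain ⟨p, hp⟩ := b2
      exact ⟨k + l + z*k*l + z*m*p, by
        linear_combination (y.1 1 1)*hk + (1+z*k)*hl + (y.1 0 1)*hm + (z*m)*hp⟩
  | inv x hx ih =>
    obtain ⟨a1, a2, a3, a4⟩ := ih
    have hinv : (x⁻¹ : Matrix.SpecialLinearGroup (Fin 2) ℤ).1 = !![x.1 1 1, -x.1 0 1; -x.1 1 0, x.1 0 0] := by
      rw [Matrix.SpecialLinearGroup.coe_inv]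
      have h2 : x.1 = !![x.1 0 0, x.1 0 1; x.1 1 0, x.1 1 1] := by
        ext i j; fin_cases i <;> fin_cases j <;> rfl
      rw [h2, Matrix.adjugate_fin_two]
    rw [hinv]
    refine ⟨?_, ?_, ?_, ?_⟩ <;> simp [a1, a2, a3, a4]

theorem stmt_8 (z : ℤ) (hz : 2 ≤ z) (M : Matrix.SpecialLinearGroup (Fin 2) ℤ)
    (hM : M ∈ Subgroup.closure {Tz z, Sz z})
    (htr : Matrix.trace ((M * Tz z * M⁻¹ * Sz z : Matrix.SpecialLinearGroup (Fin 2) ℤ) :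
        Matrix (Fin 2) (Fin 2) ℤ)
      = Matrix.trace ((Tz z * Sz z : Matrix.SpecialLinearGroup (Fin 2) ℤ) :
        Matrix (Fin 2) (Fin 2) ℤ)) :
    ∃ n : ℤ, M * Tz z * M⁻¹ = Sz z ^ n * Tz z * Sz z ^ (-n) := by
  set a := M.1 0 0 with ha'
  set b := M.1 0 1 with hb'
  set c := M.1 1 0 with hc'
  set d := M.1 1 1 with hd'
  have hMmat : M.1 = !![a, b; c, d] := by
    ext i j; fin_cases i <;> fin_cases j <;> rfl
  have hdet : a * d - b * c = 1 := by
    have := M.2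
    rw [Matrix.det_fin_two] at this
    linarith
  have hMinv : (M⁻¹ : Matrix.SpecialLinearGroup (Fin 2) ℤ).1 = !![d, -b; -c, a] := by
    rw [Matrix.SpecialLinearGroup.coe_inv, hMmat, Matrix.adjugate_fin_two]
    norm_num
  have htr' : z * z * (a * a) = z * z := by
    simp only [Matrix.SpecialLinearGroup.coe_mul] at htr
    simp only [Matrix.SpecialLinearGroup.coe_mul, hMmat, hMinv, Tz, Sz,
      Matrix.mul_fin_two, Matrix.trace_fin_two_of] at htr
    linear_combination -htr + 2*hdet
  have haa : a * a = 1 := by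
    have hz0 : z * z ≠ 0 := by positivity
    exact mul_left_cancel₀ hz0 (by linarith)
  obtain ⟨n', hcn⟩ := (closure_dvd z M hM).2.2.1
  rw [← hc'] at hcn
  refine ⟨a * n', ?_⟩
  rw [Sz_zpow, Sz_zpow]
  apply Subtype.ext
  simp only [Matrix.SpecialLinearGroup.coe_mul]
  simp only [Matrix.SpecialLinearGroup.coe_mul, hMmat, hMinv, Tz, Sz, Matrix.mul_fin_two]
  ext i j <;> fin_cases i <;> fin_cases j <;>
    simp only [Matrix.cons_val', Matrix.cons_val_zero, Matrix.cons_val_one, Matrix.head_cons,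
      Matrix.empty_val', Matrix.cons_val_fin_one, Matrix.head_fin_const, Matrix.of_apply, Fin.mk_zero, Fin.mk_one] <;>
    first
      | linear_combination hdet + z*a*hcn
      | linear_combination hdet - z*a*hcn
      | linear_combination (-z)*haa
      | linear_combination z*(c + z*n')*hcn - n'*n'*z*z*z*haa
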